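/- arXiv:2105.11568 — 2 statements merged into one kernel-verified Lean document; each statement's English description precedes it below -/
import Mathlib

section
/- For n = 2 and k ≥ 2, the (k+1)×2k presenting matrix M, whose rows are indexed by the multisets 0^{k−r}1^r (0 ≤ r ≤ k) and whose (r, (j,i)) entry is g_i(T^j x) as above, has rank k+1 (its rows are linearly independent). -/
/-- `T` swaps `0 ↔ 1` in every element of the multiset. -/
def Tmap (x : Multiset (Fin 2)) : Multiset (Fin 2) :=
  x.map (· + 1)

/-- `gstat i x` is the `i`-th smallest element of `x` (1-based), as a real number. -/
def gstat (i : ℕ) (x : Multiset (Fin 2)) : ℝ :=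
  ((((x.sort (· ≤ ·)).getD (i - 1) 0 : Fin 2) : ℕ) : ℝ)

/-- The multiset `0^{k-r} 1^r`. -/
def ms (k r : ℕ) : Multiset (Fin 2) :=
  Multiset.replicate (k - r) 0 + Multiset.replicate r 1

/-- The presenting matrix: rows indexed by the multisets `0^{k-r}1^r` (`0 ≤ r ≤ k`),
columns by pairs `(j, i)`, with entry `g_i(T^j x)`. -/
def presM (k : ℕ) : Matrix (Fin (k + 1)) (Fin 2 × Fin k) ℝ :=
  fun r p => gstat (p.2.val + 1) (Tmap^[p.1.val] (ms k r.val))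

lemma sort_ms (k r : ℕ) :
    (ms k r).sort (· ≤ ·) = List.replicate (k - r) 0 ++ List.replicate r 1 := by
  refine (fun hp hs => List.Perm.eq_of_pairwise' (Multiset.pairwise_sort _ _) hs hp) ?_ ?_
  · rw [← Multiset.coe_eq_coe, Multiset.sort_eq]
    simp [ms, ← Multiset.coe_add, ← Multiset.coe_replicate]
  · rw [List.pairwise_append]
    refine ⟨List.pairwise_replicate.2 (Or.inr le_rfl), List.pairwise_replicate.2 (Or.inr le_rfl), ?_⟩
    intro a ha b hb
    rw [List.eq_of_mem_replicate ha, List.eq_of_mem_replicate hb]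
    decide

lemma gstat_ms (k r i : ℕ) (hi : i < k) (hr : r ≤ k) :
    gstat (i + 1) (ms k r) = if k - r ≤ i then 1 else 0 := by
  rw [gstat, Nat.add_sub_cancel, sort_ms]
  by_cases h : k - r ≤ i
  · rw [if_pos h, List.getD_append_right _ _ _ _ (by simpa using h)]
    have h2 : i - (k - r) < r := by omega
    rw [List.getD_eq_getElem?_getD, List.getElem?_replicate]
    simp only [List.length_replicate]
    rw [if_pos h2]
    norm_num
  · rw [if_neg h, List.getD_append _ _ _ _ (by simpa using (lt_of_not_ge h)),
      List.getD_eq_getElem?_getD, List.getElem?_replicate, if_pos (lt_of_not_ge h)]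
    norm_num

lemma Tmap_ms (k r : ℕ) (h : r ≤ k) : Tmap (ms k r) = ms k (k - r) := by
  rw [Tmap, ms, ms, Multiset.map_add, Multiset.map_replicate, Multiset.map_replicate]
  rw [Nat.sub_sub_self h, show ((0 : Fin 2) + 1) = 1 from rfl,
    show ((1 : Fin 2) + 1) = 0 from rfl, add_comm]

theorem stmt_14 (k : ℕ) (hk : 2 ≤ k) : (presM k).rank = k + 1 := by
  have hk0 : 0 < k := by omega
  -- column selection
  set f : Fin (k + 1) → Fin 2 × Fin k := fun c =>
    if h : c.val = 0 then (1, ⟨0, hk0⟩)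
    else (0, ⟨k - c.val, Nat.sub_lt hk0 (Nat.pos_of_ne_zero h)⟩) with hf
  set P : Matrix (Fin 2 × Fin k) (Fin (k + 1)) ℝ :=
    fun p c => if p = f c then 1 else 0 with hP
  set B : Matrix (Fin (k + 1)) (Fin (k + 1)) ℝ := fun r c => presM k r (f c) with hB
  have hmul : presM k * P = B := by
    ext r c
    rw [Matrix.mul_apply]
    simp [hP, hB, Finset.sum_ite_eq']
  have hentry : ∀ r c : Fin (k + 1),
      B r c = if c.val = 0 then (if r.val = 0 then 1 else 0)
              else (if c.val ≤ r.val then 1 else 0) := by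
    intro r c
    have hr : r.val ≤ k := by omega
    by_cases hc : c.val = 0
    · have : f c = (1, ⟨0, hk0⟩) := by rw [hf]; exact dif_pos hc
      rw [hB]
      simp only [this, presM, Fin.val_one, Fin.val_zero]
      rw [Function.iterate_one, Tmap_ms k r.val hr, gstat_ms k (k - r.val) 0 hk0 (by omega)]
      have : k - (k - r.val) = r.val := by omega
      rw [this, if_pos hc]
      by_cases h0 : r.val = 0
      · rw [if_pos h0, if_pos (by omega)]
      · rw [if_neg h0, if_neg (by omega)]
    · have : f c = (0, ⟨k - c.val, by omega⟩) := by rw [hf]; exact dif_neg hc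
      rw [hB]
      simp only [this, presM, Fin.val_one, Fin.val_zero]
      rw [Function.iterate_zero, id, gstat_ms k r.val (k - c.val) (by omega) hr, if_neg hc]
      have hcle : c.val ≤ k := by omega
      by_cases h1 : c.val ≤ r.val
      · rw [if_pos (by omega), if_pos h1]
      · rw [if_neg (by omega), if_neg h1]
  have hbt : B.BlockTriangular OrderDual.toDual := by
    intro i j hij
    have hij' : i.val < j.val := hij
    rw [hentry]
    rw [if_neg (by omega), if_neg (by omega)]
  have hdiag : ∀ i : Fin (k + 1), B i i = 1 := by
    intro i
    rw [hentry]
    by_cases h : i.val = 0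
    · rw [if_pos h, if_pos h]
    · rw [if_neg h, if_pos le_rfl]
  have hdet : B.det = 1 := by
    rw [Matrix.det_of_lowerTriangular B hbt]
    simp [hdiag]
  have hrankB : B.rank = k + 1 := by
    rw [Matrix.rank_of_isUnit B ((Matrix.isUnit_iff_isUnit_det B).2 (by rw [hdet]; exact isUnit_one))]
    simp
  refine le_antisymm ?_ ?_
  · simpa using (presM k).rank_le_card_height
  · calc (k : ℕ) + 1 = B.rank := hrankB.symm
      _ = (presM k * P).rank := by rw [hmul]
      _ ≤ (presM k).rank := Matrix.rank_mul_le_left _ _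
end

section
/- Let X be the set of k-element multisets with elements in {0,...,n−1} for n > 2, T rotation by +1 mod n, and U the induced time-evolution operator on the dynamical span V of g_1,...,g_k (g_i = i-th smallest element). For every n-th root of unity ζ ≠ 1, the eigenvalue ζ of U has multiplicity exactly k, and the eigenvalue 1 has multiplicity ⌊k/2⌋ + 1. -/
open Finset

set_option linter.unusedSectionVars false
set_option maxHeartbeats 1000000

/-- `X` is the set of `k`-element multisets with elements in `{0, ..., n-1}`. -/
abbrev XX (n k : ℕ) [NeZero n] := {x : Multiset (Fin n) // Multiset.card x = k}

/-- `T` increments every element by 1 mod n. -/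
def Tk (n k : ℕ) [NeZero n] (x : XX n k) : XX n k :=
  ⟨x.1.map (· + 1), by simp [x.2]⟩

/-- `gst n k i x` is the `i`-th smallest element of `x` (1-based), as a complex number. -/
def gst (n k : ℕ) [NeZero n] (i : ℕ) (x : XX n k) : ℂ :=
  ((((x.1.sort (· ≤ ·)).getD (i - 1) 0 : Fin n) : ℕ) : ℂ)

/-- The time-evolution operator `U f = f ∘ T` on the space of all functions `X → ℂ`. -/
def Ubig (n k : ℕ) [NeZero n] : Module.End ℂ (XX n k → ℂ) where
  toFun f := f ∘ Tk n k
  map_add' := by intros; rfl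
  map_smul' := by intros; rfl

/-- `V` is the span of the functions `g_i ∘ T^j` for `1 ≤ i ≤ k`, `0 ≤ j < n`. -/
noncomputable def Vspan (n k : ℕ) [NeZero n] : Submodule ℂ (XX n k → ℂ) :=
  Submodule.span ℂ
    {f | ∃ i : Fin k, ∃ j : Fin n, f = fun x => gst n k (i.val + 1) ((Tk n k)^[j.val] x)}

/-! ### Auxiliary material -/

open Fin.NatCast

section Aux

variable (n k : ℕ) [NeZero n]

/-- the `i`-th smallest entry, as a natural number -/
def gnat (i : ℕ) (x : XX n k) : ℕ := (((x.1.sort (· ≤ ·)).getD (i - 1) 0 : Fin n) : ℕ)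

lemma gst_eq_gnat (i : ℕ) (x : XX n k) : gst n k i x = (gnat n k i x : ℂ) := rfl

lemma Tk_iter (j : ℕ) (x : XX n k) :
    ((Tk n k)^[j] x).1 = x.1.map (· + (j : Fin n)) := by
  induction j with
  | zero => simp
  | succ j ih =>
      rw [Function.iterate_succ_apply']
      show (((Tk n k)^[j] x).1.map (· + 1)) = _
      rw [ih, Multiset.map_map]
      congr 1
      funext v
      show v + (j : Fin n) + 1 = v + ((j + 1 : ℕ) : Fin n)
      push_cast
      rw [add_assoc]

lemma Tk_iter_n (x : XX n k) : (Tk n k)^[n] x = x := by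
  apply Subtype.ext
  rw [Tk_iter, Fin.natCast_self]
  simp

lemma Tk_iter_add_n (j : ℕ) (x : XX n k) : (Tk n k)^[j + n] x = (Tk n k)^[j] x := by
  rw [Function.iterate_add_apply, Tk_iter_n]

lemma sum_shift {M : Type*} [AddCommGroup M] (φ : ℕ → M) (hφ : ∀ j, φ (j + n) = φ j) :
    ∀ s : ℕ, ∑ j ∈ range n, φ (j + s) = ∑ j ∈ range n, φ j := by
  have step : ∀ ψ : ℕ → M, (∀ j, ψ (j + n) = ψ j) →
      ∑ j ∈ range n, ψ (j + 1) = ∑ j ∈ range n, ψ j := by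
    intro ψ hψ
    have h1 := Finset.sum_range_succ ψ n
    have h2 := Finset.sum_range_succ' ψ n
    have h3 : ψ n = ψ 0 := by simpa using hψ 0
    rw [h1] at h2
    have := h2.symm
    rw [h3] at this
    exact add_right_cancel this
  intro s
  induction s with
  | zero => simp
  | succ s ih =>
      have h : ∀ j : ℕ, j + (s + 1) = (j + 1) + s := by omega
      calc ∑ j ∈ range n, φ (j + (s + 1)) = ∑ j ∈ range n, (fun t => φ (t + s)) (j + 1) := by
            refine Finset.sum_congr rfl fun j _ => by rw [h j]
        _ = ∑ j ∈ range n, φ (j + s) := step (fun t => φ (t + s)) (fun j => by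
            rw [show j + n + s = (j + s) + n by omega, hφ])
        _ = ∑ j ∈ range n, φ j := ih


lemma countP_lt_iff (x : XX n k) {i c : ℕ} (hi1 : 1 ≤ i) (hik : i ≤ k) :
    (Multiset.countP (fun v : Fin n => (v : ℕ) < c) x.1 < i) ↔ c ≤ gnat n k i x := by
  classical
  set l := x.1.sort (· ≤ ·) with hl
  have hlen : l.length = k := by rw [hl, Multiset.length_sort, x.2]
  have hsort : l.Pairwise (· ≤ ·) := Multiset.pairwise_sort _ _
  have hidx : i - 1 < l.length := by omega
  have hx1 : x.1 = (l : Multiset (Fin n)) := (Multiset.sort_eq _ _).symm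
  have hcount : Multiset.countP (fun v : Fin n => (v : ℕ) < c) x.1
      = l.countP (fun v : Fin n => decide ((v : ℕ) < c)) := by
    rw [hx1, Multiset.coe_countP]
  have hg : gnat n k i x = (l[i-1] : ℕ) := by
    rw [gnat, ← hl, List.getD_eq_getElem l 0 hidx]
  rw [hcount, hg]
  have hmono : ∀ {s t : ℕ} (hs : s < l.length) (ht : t < l.length), s ≤ t → l[s] ≤ l[t] := by
    intro s t hs ht hst
    exact hsort.rel_get_of_le (a := ⟨s, hs⟩) (b := ⟨t, ht⟩) hst
  constructor
  · intro hlt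
    by_contra hc
    push_neg at hc
    -- all of the first i entries are < c, so the count is at least i
    have htake : (l.take i).countP (fun v : Fin n => decide ((v : ℕ) < c)) = (l.take i).length := by
      rw [List.countP_eq_length]
      intro a ha
      rcases List.mem_iff_getElem.mp ha with ⟨t, ht, rfl⟩
      have ht' : t < l.length := lt_of_lt_of_le ht (by simp [List.length_take])
      have htl : t ≤ i - 1 := by
        have : t < i := lt_of_lt_of_le ht (by simp [List.length_take])
        omega
      have := hmono ht' hidx htl
      simp only [List.getElem_take, decide_eq_true_eq]
      exact lt_of_le_of_lt (by exact_mod_cast this) hc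
    have hlentake : (l.take i).length = i := by simp [List.length_take]; omega
    have : i ≤ l.countP (fun v : Fin n => decide ((v : ℕ) < c)) := by
      conv_rhs => rw [← List.take_append_drop i l]
      rw [List.countP_append]
      omega
    omega
  · intro hc
    have hdrop : (l.drop (i-1)).countP (fun v : Fin n => decide ((v : ℕ) < c)) = 0 := by
      rw [List.countP_eq_zero]
      intro a ha
      rcases List.mem_iff_getElem.mp ha with ⟨t, ht, rfl⟩
      have ht' : (i-1) + t < l.length := by
        have := ht; simp [List.length_drop] at this; omega
      have hle : l[i-1] ≤ l[(i-1)+t] := hmono hidx ht' (by omega)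
      simp only [List.getElem_drop, decide_eq_true_eq, not_lt]
      calc c ≤ (l[i-1] : ℕ) := hc
        _ ≤ (l[(i-1)+t] : ℕ) := by exact_mod_cast hle
    have : l.countP (fun v : Fin n => decide ((v : ℕ) < c))
        = (l.take (i-1)).countP (fun v : Fin n => decide ((v : ℕ) < c)) := by
      conv_lhs => rw [← List.take_append_drop (i-1) l]
      rw [List.countP_append, hdrop]
      omega
    rw [this]
    have := List.countP_le_length (p := fun v : Fin n => decide ((v : ℕ) < c)) (l := l.take (i-1))
    have hlen' : (l.take (i-1)).length = i - 1 := by simp [List.length_take]; omega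
    omega

lemma gnat_lt (i : ℕ) (x : XX n k) : gnat n k i x < n := by
  exact (((x.1.sort (· ≤ ·)).getD (i - 1) 0 : Fin n)).isLt

lemma gnat_eq_card (x : XX n k) {i : ℕ} (hi1 : 1 ≤ i) (hik : i ≤ k) :
    gnat n k i x = ((Finset.Icc 1 (n-1)).filter
      (fun c => Multiset.countP (fun v : Fin n => (v : ℕ) < c) x.1 < i)).card := by
  classical
  have hfil : (Finset.Icc 1 (n-1)).filter
      (fun c => Multiset.countP (fun v : Fin n => (v : ℕ) < c) x.1 < i)
      = Finset.Icc 1 (gnat n k i x) := by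
    ext c
    simp only [Finset.mem_filter, Finset.mem_Icc]
    rw [countP_lt_iff n k x hi1 hik]
    have := gnat_lt n k i x
    omega
  rw [hfil, Nat.card_Icc]
  omega

lemma fin_sub_lt_iff (w : Fin n) {c : ℕ} (h1 : 1 ≤ c) (h2 : c ≤ n - 1) :
    ((w - (c : Fin n)) : Fin n).val < n - c ↔ c ≤ w.val := by
  have hn : 0 < n := Nat.pos_of_ne_zero (NeZero.ne n)
  have hcn : c < n := by omega
  have hc : ((c : Fin n) : ℕ) = c := by rw [Fin.val_natCast]; exact Nat.mod_eq_of_lt hcn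
  have hw : w.val < n := w.isLt
  rw [Fin.sub_def]
  simp only [hc]
  rcases le_or_gt c w.val with h | h
  · have : (n - c + w.val) % n = w.val - c := by
      rw [show n - c + w.val = (w.val - c) + 1 * n by omega, Nat.add_mul_mod_self_right]
      exact Nat.mod_eq_of_lt (by omega)
    simp only [this]
    omega
  · have : (n - c + w.val) % n = n - c + w.val := Nat.mod_eq_of_lt (by omega)
    simp only [this]
    omega

/-- The number of entries of `x` lying in the length-`c` arc "starting" at `-t`. -/
def NArc (t : Fin n) (c : ℕ) (x : XX n k) : ℕ :=
  Multiset.countP (fun v : Fin n => ((v + t : Fin n) : ℕ) < c) x.1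

lemma NArc_le (t : Fin n) (c : ℕ) (x : XX n k) : NArc n k t c x ≤ k := by
  refine le_trans (Multiset.countP_le_card _ _) (le_of_eq x.2)

lemma NArc_compl (x : XX n k) (t : Fin n) {c : ℕ} (h1 : 1 ≤ c) (h2 : c ≤ n - 1) :
    NArc n k (t - (c : Fin n)) (n - c) x + NArc n k t c x = k := by
  classical
  have hpt : ∀ v : Fin n, (((v + (t - (c : Fin n)) : Fin n) : ℕ) < n - c)
      = ¬ (((v + t : Fin n) : ℕ) < c) := by
    intro v
    have : v + (t - (c : Fin n)) = (v + t) - (c : Fin n) := (add_sub_assoc v t _).symm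
    rw [this, eq_iff_iff]
    rw [fin_sub_lt_iff n (v + t) h1 h2]
    omega
  have : NArc n k (t - (c : Fin n)) (n - c) x
      = Multiset.countP (fun v : Fin n => ¬ (((v + t : Fin n) : ℕ) < c)) x.1 := by
    rw [NArc]
    exact Multiset.countP_congr rfl (fun v _ => hpt v)
  rw [this, NArc]
  have hcard := Multiset.card_eq_countP_add_countP (fun v : Fin n => ((v + t : Fin n) : ℕ) < c) x.1
  rw [x.2] at hcard
  omega

lemma gnat_iter_eq (x : XX n k) {i : ℕ} (hi1 : 1 ≤ i) (hik : i ≤ k) (t : Fin n) :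
    gnat n k i ((Tk n k)^[t.val] x)
      = ((Finset.Icc 1 (n-1)).filter (fun c => NArc n k t c x < i)).card := by
  classical
  rw [gnat_eq_card n k _ hi1 hik]
  congr 1
  apply Finset.filter_congr
  intro c _
  have h1 : ((Tk n k)^[t.val] x).1 = x.1.map (· + (t.val : Fin n)) := Tk_iter n k _ x
  have ht : ((t.val : ℕ) : Fin n) = t := by
    apply Fin.ext; rw [Fin.val_natCast]; exact Nat.mod_eq_of_lt t.isLt
  rw [h1, ht, Multiset.countP_map, ← Multiset.countP_eq_card_filter, NArc]

lemma AN_pair (x : XX n k) {i : ℕ} (hi1 : 1 ≤ i) (hik : i ≤ k) :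
    (∑ j ∈ range n, gnat n k i ((Tk n k)^[j] x)) +
      (∑ j ∈ range n, gnat n k (k + 1 - i) ((Tk n k)^[j] x)) = n * (n - 1) := by
  classical
  have hi1' : 1 ≤ k + 1 - i := by omega
  have hik' : k + 1 - i ≤ k := by omega
  have conv1 : ∀ (I : ℕ), 1 ≤ I → I ≤ k → ∑ j ∈ range n, gnat n k I ((Tk n k)^[j] x)
      = ∑ p ∈ (Finset.univ : Finset (Fin n)) ×ˢ Finset.Icc 1 (n-1),
          (if NArc n k p.1 p.2 x < I then 1 else 0) := by
    intro I h1 h2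
    rw [← Fin.sum_univ_eq_sum_range (fun j => gnat n k I ((Tk n k)^[j] x)) n]
    rw [Finset.sum_product]
    refine Finset.sum_congr rfl fun t _ => ?_
    rw [gnat_iter_eq n k x h1 h2 t, Finset.card_filter]
  rw [conv1 i hi1 hik, conv1 (k+1-i) hi1' hik']
  -- reindex the second sum by the complement involution
  have hre : ∑ p ∈ (Finset.univ : Finset (Fin n)) ×ˢ Finset.Icc 1 (n-1),
        (if NArc n k p.1 p.2 x < k + 1 - i then 1 else 0)
      = ∑ p ∈ (Finset.univ : Finset (Fin n)) ×ˢ Finset.Icc 1 (n-1),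
          (if NArc n k (p.1 - (p.2 : Fin n)) (n - p.2) x < k + 1 - i then 1 else 0) := by
    refine Finset.sum_nbij' (fun p => (p.1 - ((p.2 : ℕ) : Fin n), n - p.2))
      (fun p => (p.1 - ((p.2 : ℕ) : Fin n), n - p.2)) ?_ ?_ ?_ ?_ ?_
    · rintro ⟨t, c⟩ hm
      simp only [Finset.mem_product, Finset.mem_Icc, Finset.mem_univ, true_and] at hm ⊢
      omega
    · rintro ⟨t, c⟩ hm
      simp only [Finset.mem_product, Finset.mem_Icc, Finset.mem_univ, true_and] at hm ⊢
      omega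
    · rintro ⟨t, c⟩ hm
      simp only [Finset.mem_product, Finset.mem_Icc, Finset.mem_univ, true_and] at hm
      have hc : c + (n - c) = n := by omega
      have : t - (c : Fin n) - ((n - c : ℕ) : Fin n) = t := by
        rw [sub_sub, ← Nat.cast_add, hc, Fin.natCast_self, sub_zero]
      simp only [Prod.mk.injEq]
      exact ⟨this, by omega⟩
    · rintro ⟨t, c⟩ hm
      simp only [Finset.mem_product, Finset.mem_Icc, Finset.mem_univ, true_and] at hm
      have hc : c + (n - c) = n := by omega
      have : t - (c : Fin n) - ((n - c : ℕ) : Fin n) = t := by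
        rw [sub_sub, ← Nat.cast_add, hc, Fin.natCast_self, sub_zero]
      simp only [Prod.mk.injEq]
      exact ⟨this, by omega⟩
    · rintro ⟨t, c⟩ hm
      dsimp only
      simp only [Finset.mem_product, Finset.mem_Icc, Finset.mem_univ, true_and] at hm
      have hc : c + (n - c) = n := by omega
      have h1 : t - (c : Fin n) - ((n - c : ℕ) : Fin n) = t := by
        rw [sub_sub, ← Nat.cast_add, hc, Fin.natCast_self, sub_zero]
      rw [h1, show n - (n - c) = c by omega]
  rw [hre, ← Finset.sum_add_distrib]
  have : ∀ p ∈ (Finset.univ : Finset (Fin n)) ×ˢ Finset.Icc 1 (n-1),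
      ((if NArc n k p.1 p.2 x < i then 1 else 0) +
        (if NArc n k (p.1 - (p.2 : Fin n)) (n - p.2) x < k + 1 - i then 1 else 0)) = 1 := by
    rintro ⟨t, c⟩ hm
    dsimp only
    simp only [Finset.mem_product, Finset.mem_Icc, Finset.mem_univ, true_and] at hm
    have hcompl := NArc_compl n k x t hm.1 hm.2
    have hle := NArc_le n k t c x
    by_cases h : NArc n k t c x < i
    · rw [if_pos h, if_neg (by omega)]
    · rw [if_neg h, if_pos (by omega)]
  rw [Finset.sum_congr rfl this, Finset.sum_const, Finset.card_product, Finset.card_univ,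
    Fintype.card_fin, Nat.card_Icc, smul_eq_mul, mul_one]
  have : n - 1 + 1 - 1 = n - 1 := by omega
  rw [this]

/-- the candidate eigenfunctions -/
noncomputable def FF (ξ : ℂ) (i : ℕ) : XX n k → ℂ :=
  fun x => ∑ j ∈ range n, ξ ^ j * gst n k i ((Tk n k)^[j] x)

lemma FF_eq_sum (ξ : ℂ) (i : ℕ) :
    FF n k ξ i = ∑ j ∈ range n, ξ ^ j • (fun x => gst n k i ((Tk n k)^[j] x)) := by
  funext x
  rw [Finset.sum_apply]
  simp [FF]

lemma FF_mem_V (ξ : ℂ) (i : Fin k) : FF n k ξ (i.val + 1) ∈ Vspan n k := by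
  rw [FF_eq_sum]
  apply Submodule.sum_mem
  intro j hj
  apply Submodule.smul_mem
  apply Submodule.subset_span
  exact ⟨i, ⟨j, Finset.mem_range.mp hj⟩, rfl⟩

lemma FF_eigen {ζ ξ : ℂ} (hξζ : ξ * ζ = 1) (hξn : ξ ^ n = 1) (i : ℕ) :
    Ubig n k (FF n k ξ i) = ζ • FF n k ξ i := by
  funext x
  show FF n k ξ i (Tk n k x) = ζ * FF n k ξ i x
  have hTT : ∀ j : ℕ, (Tk n k)^[j] (Tk n k x) = (Tk n k)^[j+1] x := by
    intro j
    rw [Function.iterate_add_apply]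
    simp
  have hper : ∀ j : ℕ, (fun u => ξ ^ u * gst n k i ((Tk n k)^[u] x)) (j + n)
      = (fun u => ξ ^ u * gst n k i ((Tk n k)^[u] x)) j := by
    intro j
    simp only [pow_add, hξn, mul_one, Tk_iter_add_n]
  calc FF n k ξ i (Tk n k x) = ∑ j ∈ range n, ξ ^ j * gst n k i ((Tk n k)^[j+1] x) := by
        rw [FF]
        exact Finset.sum_congr rfl fun j _ => by rw [hTT j]
    _ = ∑ j ∈ range n, ζ * (ξ ^ (j+1) * gst n k i ((Tk n k)^[j+1] x)) := by
        refine Finset.sum_congr rfl fun j _ => ?_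
        rw [pow_succ]
        have : ζ * (ξ ^ j * ξ) = ξ ^ j * (ξ * ζ) := by ring
        rw [← mul_assoc, ← mul_assoc, mul_comm ζ (ξ^j), mul_assoc (ξ^j) ζ ξ, mul_comm ζ ξ, hξζ, mul_one]
    _ = ζ * ∑ j ∈ range n, (fun u => ξ ^ u * gst n k i ((Tk n k)^[u] x)) (j + 1) := by
        rw [Finset.mul_sum]
    _ = ζ * FF n k ξ i x := by
        rw [sum_shift n (fun u => ξ ^ u * gst n k i ((Tk n k)^[u] x)) hper 1, FF]

lemma Ubig_pow_apply (t : ℕ) : ∀ (f : XX n k → ℂ) (x : XX n k),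
    (((Ubig n k) ^ t) f) x = f ((Tk n k)^[t] x) := by
  induction t with
  | zero => intro f x; simp
  | succ t ih =>
      intro f x
      rw [pow_succ']
      show (((Ubig n k) ^ t) f) (Tk n k x) = _
      rw [ih f (Tk n k x), Function.iterate_succ_apply]

lemma inf_eigen_eq_span (hn : 2 < n) {ζ ξ : ℂ} (hζn : ζ ^ n = 1) (hξζ : ξ * ζ = 1)
    (hξn : ξ ^ n = 1) :
    Vspan n k ⊓ Module.End.eigenspace (Ubig n k) ζ =
      Submodule.span ℂ (Set.range fun i : Fin k => FF n k ξ (i.val + 1)) := by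
  have hζ0 : ζ ≠ 0 := fun h => by simp [h] at hξζ
  have hξ0 : ξ ≠ 0 := fun h => by simp [h] at hξζ
  have hn0 : (n : ℂ) ≠ 0 := Nat.cast_ne_zero.mpr (by omega)
  apply le_antisymm
  · -- the projection argument
    set P : (XX n k → ℂ) →ₗ[ℂ] (XX n k → ℂ) :=
      (n : ℂ)⁻¹ • ∑ t ∈ range n, ξ ^ t • ((Ubig n k) ^ t : Module.End ℂ (XX n k → ℂ)) with hP
    rintro f ⟨hfV, hfE⟩
    have hUt : ∀ t : ℕ, ((Ubig n k) ^ t) f = ζ ^ t • f := by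
      intro t
      induction t with
      | zero => simp
      | succ t ih =>
          have h1 : ((Ubig n k) ^ (t+1)) f = ((Ubig n k) ^ t) (Ubig n k f) := by
            rw [pow_succ, Module.End.mul_apply]
          rw [h1, Module.End.mem_eigenspace_iff.mp hfE, map_smul, ih, smul_smul, pow_succ,
            mul_comm]
    have hPf : P f = f := by
      rw [hP]
      simp only [LinearMap.smul_apply, LinearMap.sum_apply]
      have : ∀ t ∈ range n, ξ ^ t • (((Ubig n k) ^ t) f) = f := by
        intro t _
        rw [hUt t, smul_smul, ← mul_pow, hξζ, one_pow, one_smul]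
      rw [Finset.sum_congr rfl this, Finset.sum_const, Finset.card_range]
      rw [← Nat.cast_smul_eq_nsmul ℂ, smul_smul, inv_mul_cancel₀ hn0, one_smul]
    -- P maps the generators into the span of the FF's
    have hgen : Vspan n k ≤ Submodule.comap P
        (Submodule.span ℂ (Set.range fun i : Fin k => FF n k ξ (i.val + 1))) := by
      rw [Vspan]
      apply Submodule.span_le.mpr
      rintro _ ⟨i, j, rfl⟩
      set s : XX n k → ℂ := fun x => gst n k (i.val + 1) ((Tk n k)^[j.val] x) with hs
      have hUts : ∀ t : ℕ, ((Ubig n k) ^ t) s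
          = fun x => gst n k (i.val + 1) ((Tk n k)^[j.val + t] x) := by
        intro t
        funext x
        rw [Ubig_pow_apply, hs]
        rw [Function.iterate_add_apply]
      have hper : ∀ t : ℕ,
          (fun u => ξ ^ u • (fun x => gst n k (i.val + 1) ((Tk n k)^[u] x))) (t + n)
          = (fun u => ξ ^ u • (fun x => gst n k (i.val + 1) ((Tk n k)^[u] x))) t := by
        intro t
        simp only [pow_add, hξn, mul_one]
        funext x
        simp only [Pi.smul_apply]
        rw [Tk_iter_add_n]
      have key : ξ ^ j.val • (∑ t ∈ range n, ξ ^ t • (((Ubig n k) ^ t) s))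
          = FF n k ξ (i.val + 1) := by
        rw [Finset.smul_sum]
        have : ∀ t ∈ range n, ξ ^ j.val • (ξ ^ t • (((Ubig n k) ^ t) s))
            = (fun u => ξ ^ u • (fun x => gst n k (i.val + 1) ((Tk n k)^[u] x))) (t + j.val) := by
          intro t _
          rw [hUts t, smul_smul, ← pow_add]
          simp only []
          rw [add_comm j.val t]
        rw [Finset.sum_congr rfl this,
          sum_shift n (fun u => ξ ^ u • (fun x => gst n k (i.val + 1) ((Tk n k)^[u] x))) hper j.val,
          FF_eq_sum]
      have hPs : P s = ((n : ℂ)⁻¹ * (ξ ^ j.val)⁻¹) • FF n k ξ (i.val + 1) := by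
        have h2 : (∑ t ∈ range n, ξ ^ t • (((Ubig n k) ^ t) s))
            = (ξ ^ j.val)⁻¹ • FF n k ξ (i.val + 1) := by
          rw [← key, smul_smul, inv_mul_cancel₀ (pow_ne_zero _ hξ0), one_smul]
        rw [hP]
        simp only [LinearMap.smul_apply, LinearMap.sum_apply]
        rw [h2, smul_smul]
      rw [SetLike.mem_coe, Submodule.mem_comap, hPs]
      exact Submodule.smul_mem _ _ (Submodule.subset_span ⟨i, rfl⟩)
    have := hgen hfV
    rw [Submodule.mem_comap, hPf] at this
    exact this
  · apply Submodule.span_le.mpr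
    rintro _ ⟨i, rfl⟩
    exact ⟨FF_mem_V n k ξ i, Module.End.mem_eigenspace_iff.mpr (FF_eigen n k hξζ hξn _)⟩

/-- the test configurations: `k - m` zeros and `m` ones -/
def xmm (m : ℕ) : XX n k :=
  ⟨Multiset.replicate (k - m) 0 + Multiset.replicate (min m k) 1, by
    simp [Multiset.card_replicate]; omega⟩

lemma sort_two_blocks {a b : Fin n} (hab : a ≤ b) (p q : ℕ) :
    (Multiset.replicate p a + Multiset.replicate q b).sort (· ≤ ·)
      = List.replicate p a ++ List.replicate q b := by
  refine (fun hp h1 h2 => List.Perm.eq_of_pairwise' (r := (· ≤ · : Fin n → Fin n → Prop)) h1 h2 hp) ?_ ?_ ?_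
  · have : (Multiset.replicate p a + Multiset.replicate q b : Multiset (Fin n))
        = ((List.replicate p a ++ List.replicate q b : List (Fin n)) : Multiset (Fin n)) := by
      rw [← Multiset.coe_add, Multiset.coe_replicate, Multiset.coe_replicate]
    rw [← Multiset.coe_eq_coe, Multiset.sort_eq, this]
  · exact Multiset.pairwise_sort _ _
  · rw [List.pairwise_append]
    refine ⟨?_, ?_, ?_⟩
    · rw [List.pairwise_replicate]; right; exact le_refl a
    · rw [List.pairwise_replicate]; right; exact le_refl b
    · intro u hu v hv
      rw [List.eq_of_mem_replicate hu, List.eq_of_mem_replicate hv]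
      exact hab

lemma gnat_two_blocks {a b : Fin n} (hab : a ≤ b) {p q i : ℕ} (hpq : p + q = k)
    (hi1 : 1 ≤ i) (hik : i ≤ k) (x : XX n k)
    (hx : x.1 = Multiset.replicate p a + Multiset.replicate q b) :
    gnat n k i x = if i ≤ p then (a : ℕ) else (b : ℕ) := by
  rw [gnat, hx, sort_two_blocks n hab p q]
  have hlen : (List.replicate p a ++ List.replicate q b).length = k := by
    simp [hpq]
  have hidx : i - 1 < (List.replicate p a ++ List.replicate q b).length := by omega
  rw [List.getD_eq_getElem _ _ hidx]
  by_cases h : i ≤ p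
  · have h1 : i - 1 < (List.replicate p a).length := by simp; omega
    rw [List.getElem_append_left h1, List.getElem_replicate, if_pos h]
  · have h1 : (List.replicate p a).length ≤ i - 1 := by simp; omega
    rw [List.getElem_append_right h1, List.getElem_replicate, if_neg h]

lemma gnat_xmm (hn : 2 < n) {m i j : ℕ} (hm : m ≤ k) (hi1 : 1 ≤ i) (hik : i ≤ k)
    (hj : j < n) :
    gnat n k i ((Tk n k)^[j] (xmm n k m)) =
      if j = n - 1 then (if i ≤ m then 0 else n - 1)
      else (if i ≤ k - m then j else j + 1) := by
  have hmin : min m k = m := min_eq_left hm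
  have hval : ((Tk n k)^[j] (xmm n k m)).1
      = Multiset.replicate (k - m) ((j : ℕ) : Fin n) + Multiset.replicate m ((j+1 : ℕ) : Fin n) := by
    rw [Tk_iter, xmm]
    simp only [hmin]
    rw [Multiset.map_add, Multiset.map_replicate, Multiset.map_replicate]
    congr 2
    · rw [zero_add]
    · push_cast
      rw [add_comm]
  by_cases hjn : j = n - 1
  · subst hjn
    have hb : ((n - 1 + 1 : ℕ) : Fin n) = (0 : Fin n) := by
      rw [show n - 1 + 1 = n by omega, Fin.natCast_self]
    have ha : (((n - 1 : ℕ) : Fin n) : ℕ) = n - 1 := by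
      rw [Fin.val_natCast]; exact Nat.mod_eq_of_lt (by omega)
    have hval' : ((Tk n k)^[n-1] (xmm n k m)).1
        = Multiset.replicate m (0 : Fin n) + Multiset.replicate (k - m) ((n - 1 : ℕ) : Fin n) := by
      rw [hval, hb, add_comm]
    have := gnat_two_blocks n k (a := (0 : Fin n)) (b := ((n - 1 : ℕ) : Fin n))
      (by rw [Fin.le_def]; simp) (by omega : m + (k - m) = k) hi1 hik _ hval'
    rw [this, if_pos rfl]
    by_cases h : i ≤ m
    · rw [if_pos h, if_pos h]; rfl
    · rw [if_neg h, if_neg h, ha]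
  · have hjlt : j < n - 1 := by omega
    have ha : (((j : ℕ) : Fin n) : ℕ) = j := by
      rw [Fin.val_natCast]; exact Nat.mod_eq_of_lt (by omega)
    have hb : (((j + 1 : ℕ) : Fin n) : ℕ) = j + 1 := by
      rw [Fin.val_natCast]; exact Nat.mod_eq_of_lt (by omega)
    have := gnat_two_blocks n k (a := ((j : ℕ) : Fin n)) (b := ((j+1 : ℕ) : Fin n))
      (by rw [Fin.le_def, ha, hb]; omega) (by omega : (k - m) + m = k) hi1 hik _ hval
    rw [this, if_neg hjn]
    by_cases h : i ≤ k - m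
    · rw [if_pos h, if_pos h, ha]
    · rw [if_neg h, if_neg h, hb]

lemma FF_diff (hn : 2 < n) (ξ : ℂ) {i m : ℕ} (hi1 : 1 ≤ i) (hik : i ≤ k)
    (hm1 : 1 ≤ m) (hmk : m ≤ k) :
    FF n k ξ i (xmm n k m) - FF n k ξ i (xmm n k (m-1)) =
      (∑ j ∈ range (n-1), ξ ^ j) * (if i = k - m + 1 then 1 else 0)
        - (n - 1 : ℂ) * ξ ^ (n-1) * (if i = m then 1 else 0) := by
  have hgd : ∀ j < n, gst n k i ((Tk n k)^[j] (xmm n k m))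
        - gst n k i ((Tk n k)^[j] (xmm n k (m-1)))
      = if j = n - 1 then (if i = m then -((n:ℂ) - 1) else 0)
        else (if i = k - m + 1 then 1 else 0) := by
    intro j hj
    rw [gst_eq_gnat, gst_eq_gnat, gnat_xmm n k hn hmk hi1 hik hj,
      gnat_xmm n k hn (by omega : m - 1 ≤ k) hi1 hik hj]
    by_cases hjn : j = n - 1
    · rw [if_pos hjn, if_pos hjn, if_pos hjn]
      by_cases h1 : i ≤ m - 1
      · rw [if_pos (by omega : i ≤ m), if_pos h1, if_neg (by omega)]
        simp
      · by_cases h2 : i ≤ m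
        · rw [if_pos h2, if_neg h1, if_pos (by omega : i = m)]
          push_cast [Nat.cast_sub (by omega : 1 ≤ n)]
          ring
        · rw [if_neg h2, if_neg h1, if_neg (by omega)]
          simp
    · rw [if_neg hjn, if_neg hjn, if_neg hjn]
      by_cases h1 : i ≤ k - m
      · rw [if_pos h1, if_pos (by omega : i ≤ k - (m-1)), if_neg (by omega)]
        simp
      · by_cases h2 : i ≤ k - (m - 1)
        · rw [if_neg h1, if_pos h2, if_pos (by omega : i = k - m + 1)]
          push_cast
          ring
        · rw [if_neg h1, if_neg h2, if_neg (by omega)]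
          simp
  have hsplit : ∀ (M : ℕ), FF n k ξ i (xmm n k M) = ∑ j ∈ range n,
      ξ ^ j * gst n k i ((Tk n k)^[j] (xmm n k M)) := fun M => rfl
  rw [hsplit, hsplit, ← Finset.sum_sub_distrib]
  have : ∀ j ∈ range n, ξ ^ j * gst n k i ((Tk n k)^[j] (xmm n k m))
        - ξ ^ j * gst n k i ((Tk n k)^[j] (xmm n k (m-1)))
      = ξ ^ j * (if j = n - 1 then (if i = m then -((n:ℂ) - 1) else 0)
          else (if i = k - m + 1 then 1 else 0)) := by
    intro j hj
    rw [← mul_sub, hgd j (Finset.mem_range.mp hj)]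
  rw [Finset.sum_congr rfl this]
  have hn1 : n - 1 + 1 = n := by omega
  calc ∑ j ∈ range n, ξ ^ j * (if j = n - 1 then (if i = m then -((n:ℂ) - 1) else 0)
          else (if i = k - m + 1 then 1 else 0))
      = ∑ j ∈ range (n-1+1), ξ ^ j * (if j = n - 1 then (if i = m then -((n:ℂ) - 1) else 0)
          else (if i = k - m + 1 then 1 else 0)) := by rw [hn1]
    _ = (∑ j ∈ range (n-1), ξ ^ j * (if j = n - 1 then (if i = m then -((n:ℂ) - 1) else 0)
          else (if i = k - m + 1 then 1 else 0)))
        + ξ ^ (n-1) * (if i = m then -((n:ℂ) - 1) else 0) := by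
        rw [Finset.sum_range_succ, if_pos rfl]
    _ = (∑ j ∈ range (n-1), ξ ^ j * (if i = k - m + 1 then 1 else 0))
        + ξ ^ (n-1) * (if i = m then -((n:ℂ) - 1) else 0) := by
        congr 1
        refine Finset.sum_congr rfl fun j hj => ?_
        rw [if_neg (by have := Finset.mem_range.mp hj; omega)]
    _ = (∑ j ∈ range (n-1), ξ ^ j) * (if i = k - m + 1 then 1 else 0)
        - (n - 1 : ℂ) * ξ ^ (n-1) * (if i = m then 1 else 0) := by
        rw [← Finset.sum_mul]
        by_cases h : i = m <;> simp [h] <;> ring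

lemma geom_part (hn : 2 < n) {ξ : ℂ} (hξ1 : ξ ≠ 1) (hξn : ξ ^ n = 1) :
    ∑ j ∈ range (n-1), ξ ^ j = -ξ ^ (n-1) := by
  have h0 : ∑ j ∈ range n, ξ ^ j = 0 := by
    rw [geom_sum_eq hξ1, hξn, sub_self, zero_div]
  have hn1 : n - 1 + 1 = n := by omega
  have : ∑ j ∈ range (n-1+1), ξ ^ j = 0 := by rw [hn1]; exact h0
  rw [Finset.sum_range_succ] at this
  linear_combination this

lemma rel_from_sum (hn : 2 < n) (hk : 2 ≤ k) (ξ : ℂ) (c : Fin k → ℂ)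
    (hc : ∑ i : Fin k, c i • FF n k ξ (i.val + 1) = 0) (m : Fin k) :
    (∑ j ∈ range (n-1), ξ ^ j) * c ⟨k - 1 - m.val, by omega⟩
      - (n - 1 : ℂ) * ξ ^ (n-1) * c m = 0 := by
  classical
  have h1 := congrFun hc (xmm n k (m.val + 1))
  have h2 := congrFun hc (xmm n k m.val)
  rw [Finset.sum_apply] at h1 h2
  simp only [Pi.smul_apply, smul_eq_mul, Pi.zero_apply] at h1 h2
  have hsub : ∑ i : Fin k, c i * (FF n k ξ (i.val + 1) (xmm n k (m.val + 1))
      - FF n k ξ (i.val + 1) (xmm n k m.val)) = 0 := by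
    have : ∀ i : Fin k, c i * (FF n k ξ (i.val + 1) (xmm n k (m.val + 1))
        - FF n k ξ (i.val + 1) (xmm n k m.val))
        = c i * FF n k ξ (i.val + 1) (xmm n k (m.val + 1))
          - c i * FF n k ξ (i.val + 1) (xmm n k m.val) := fun i => by ring
    rw [Fintype.sum_congr _ _ this, Finset.sum_sub_distrib, h1, h2, sub_zero]
  have hM1 : 1 ≤ m.val + 1 := by omega
  have hMk : m.val + 1 ≤ k := by omega
  have hdiff : ∀ i : Fin k, FF n k ξ (i.val + 1) (xmm n k (m.val + 1))
      - FF n k ξ (i.val + 1) (xmm n k m.val)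
      = (∑ j ∈ range (n-1), ξ ^ j) * (if i = (⟨k - 1 - m.val, by omega⟩ : Fin k) then 1 else 0)
        - (n - 1 : ℂ) * ξ ^ (n-1) * (if i = m then 1 else 0) := by
    intro i
    have := FF_diff n k hn ξ (i := i.val + 1) (m := m.val + 1) (by omega) (by omega) (by omega) hMk
    rw [show m.val + 1 - 1 = m.val by omega] at this
    rw [this]
    congr 2
    · congr 1
      rw [eq_iff_iff]
      rw [Fin.ext_iff]
      simp only []
      omega
    · congr 1
      rw [eq_iff_iff, Fin.ext_iff]
      omega
  rw [Fintype.sum_congr _ _ (fun i => by rw [hdiff i])] at hsub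
  set a : Fin k := ⟨k - 1 - m.val, by omega⟩ with ha
  have hexp : ∀ i : Fin k, c i * ((∑ j ∈ range (n-1), ξ ^ j) * (if i = a then 1 else 0)
      - (n - 1 : ℂ) * ξ ^ (n-1) * (if i = m then 1 else 0))
      = (if i = a then (∑ j ∈ range (n-1), ξ ^ j) * c i else 0)
        - (if i = m then (n - 1 : ℂ) * ξ ^ (n-1) * c i else 0) := by
    intro i
    split_ifs <;> ring
  rw [Fintype.sum_congr _ _ hexp, Finset.sum_sub_distrib, Finset.sum_ite_eq',
    Finset.sum_ite_eq'] at hsub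
  simp only [Finset.mem_univ, if_pos] at hsub
  exact hsub

lemma indep_ne_one (hn : 2 < n) (hk : 2 ≤ k) {ξ : ℂ} (hξ1 : ξ ≠ 1) (hξn : ξ ^ n = 1) :
    LinearIndependent ℂ (fun i : Fin k => FF n k ξ (i.val + 1)) := by
  rw [Fintype.linearIndependent_iff]
  intro c hc i0
  have hS : ∑ j ∈ range (n-1), ξ ^ j = -ξ ^ (n-1) := geom_part n hn hξ1 hξn
  have hξ0 : ξ ≠ 0 := by
    intro h
    rw [h, zero_pow (by omega : n ≠ 0)] at hξn
    exact zero_ne_one hξn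
  have hrel : ∀ m : Fin k, c ⟨k - 1 - m.val, by omega⟩ + (n - 1 : ℂ) * c m = 0 := by
    intro m
    have := rel_from_sum n k hn hk ξ c hc m
    rw [hS] at this
    have hp : ξ ^ (n-1) ≠ 0 := pow_ne_zero _ hξ0
    have : ξ ^ (n-1) * (c ⟨k - 1 - m.val, by omega⟩ + (n - 1 : ℂ) * c m) = 0 := by
      linear_combination -this
    rcases mul_eq_zero.mp this with h | h
    · exact absurd h hp
    · exact h
  set a : Fin k := ⟨k - 1 - i0.val, by omega⟩ with hadef
  have h1 : c a + (n - 1 : ℂ) * c i0 = 0 := hrel i0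
  have h2 : c i0 + (n - 1 : ℂ) * c a = 0 := by
    have := hrel a
    have haa : (⟨k - 1 - a.val, by omega⟩ : Fin k) = i0 := by
      rw [Fin.ext_iff]; simp only [hadef]; omega
    rw [haa] at this
    exact this
  have hne : ((n : ℂ) - 1) ^ 2 - 1 ≠ 0 := by
    have hcast : ((n : ℂ) - 1) ^ 2 - 1 = (n : ℂ) * ((n : ℂ) - 2) := by ring
    rw [hcast]
    apply mul_ne_zero
    · exact Nat.cast_ne_zero.mpr (by omega)
    · intro h
      have : (n : ℂ) = 2 := by linear_combination h
      have : (n : ℕ) = 2 := by exact_mod_cast this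
      omega
  have : (((n : ℂ) - 1) ^ 2 - 1) * c i0 = 0 := by linear_combination ((n : ℂ) - 1) * h1 - h2
  rcases mul_eq_zero.mp this with h | h
  · exact absurd h hne
  · exact h

lemma FF_one_pair (x : XX n k) {i : ℕ} (hi1 : 1 ≤ i) (hik : i ≤ k) :
    FF n k 1 i x + FF n k 1 (k + 1 - i) x = ((n * (n-1) : ℕ) : ℂ) := by
  have h1 : ∀ I : ℕ, FF n k 1 I x = ((∑ j ∈ range n, gnat n k I ((Tk n k)^[j] x) : ℕ) : ℂ) := by
    intro I
    rw [FF]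
    push_cast
    exact Finset.sum_congr rfl fun j _ => by rw [one_pow, one_mul, gst_eq_gnat]
  rw [h1, h1, ← Nat.cast_add, AN_pair n k x hi1 hik]

/-- basis family for the eigenvalue 1 -/
noncomputable def Bfam : Fin (k/2+1) → (XX n k → ℂ) := fun j =>
  if j.val < k/2 then FF n k 1 (j.val + 1) else fun _ => (1 : ℂ)

lemma indep_B (hn : 2 < n) (hk : 2 ≤ k) : LinearIndependent ℂ (Bfam n k) := by
  classical
  rw [Fintype.linearIndependent_iff]
  intro d hd
  have hn1 : ((n : ℂ) - 1) ≠ 0 := by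
    intro h
    have : (n : ℂ) = 1 := by linear_combination h
    have : (n : ℕ) = 1 := by exact_mod_cast this
    omega
  have hzero : ∀ j0 : Fin (k/2+1), j0.val < k/2 → d j0 = 0 := by
    intro j0 hj0
    have h1 := congrFun hd (xmm n k (j0.val + 1))
    have h2 := congrFun hd (xmm n k j0.val)
    rw [Finset.sum_apply] at h1 h2
    simp only [Pi.smul_apply, smul_eq_mul, Pi.zero_apply] at h1 h2
    have hsub : ∑ j : Fin (k/2+1), d j * (Bfam n k j (xmm n k (j0.val+1))
        - Bfam n k j (xmm n k j0.val)) = 0 := by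
      have : ∀ j : Fin (k/2+1), d j * (Bfam n k j (xmm n k (j0.val+1))
          - Bfam n k j (xmm n k j0.val))
          = d j * Bfam n k j (xmm n k (j0.val+1)) - d j * Bfam n k j (xmm n k j0.val) :=
        fun j => by ring
      rw [Fintype.sum_congr _ _ this, Finset.sum_sub_distrib, h1, h2, sub_zero]
    have hdiff : ∀ j : Fin (k/2+1), Bfam n k j (xmm n k (j0.val+1)) - Bfam n k j (xmm n k j0.val)
        = if j = j0 then -((n:ℂ)-1) else 0 := by
      intro j
      rw [Bfam]
      by_cases hj : j.val < k/2
      · rw [if_pos hj]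
        have hd2 := FF_diff n k hn 1 (i := j.val+1) (m := j0.val+1) (by omega)
          (by omega : j.val + 1 ≤ k) (by omega) (by omega : j0.val+1 ≤ k)
        rw [show j0.val + 1 - 1 = j0.val by omega] at hd2
        rw [hd2]
        simp only [one_pow]
        rw [Finset.sum_const, Finset.card_range, nsmul_eq_mul, mul_one]
        rw [if_neg (by omega : ¬ (j.val + 1 = k - (j0.val+1) + 1))]
        by_cases hjj : j = j0
        · subst hjj
          rw [if_pos rfl, if_pos rfl]
          ring
        · rw [if_neg (by intro h; exact hjj (Fin.ext (by omega))), if_neg hjj]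
          ring
      · rw [if_neg hj]
        rw [if_neg (by intro h; subst h; exact hj hj0)]
        simp
    have : ∀ j : Fin (k/2+1), d j * (Bfam n k j (xmm n k (j0.val+1))
        - Bfam n k j (xmm n k j0.val)) = if j = j0 then d j * -((n:ℂ)-1) else 0 := by
      intro j
      rw [hdiff j]
      split_ifs <;> ring
    rw [Fintype.sum_congr _ _ this, Finset.sum_ite_eq'] at hsub
    simp only [Finset.mem_univ, if_pos] at hsub
    rcases mul_eq_zero.mp hsub with h | h
    · exact h
    · exact absurd (by linear_combination -h) hn1
  intro j0
  by_cases hj0 : j0.val < k/2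
  · exact hzero j0 hj0
  · have h0 := congrFun hd (xmm n k 0)
    rw [Finset.sum_apply] at h0
    simp only [Pi.smul_apply, smul_eq_mul, Pi.zero_apply] at h0
    rw [Finset.sum_eq_single j0 (fun b _ hb => by
        have hbv : b.val < k/2 := by
          have hb1 := b.isLt
          have hj1 := j0.isLt
          rcases lt_or_ge b.val (k/2) with h | h
          · exact h
          · exact absurd (Fin.ext (by omega) : b = j0) hb
        rw [hzero b hbv, zero_mul])
      (fun hmem => absurd (Finset.mem_univ j0) hmem)] at h0
    rw [Bfam, if_neg hj0] at h0
    simpa using h0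

lemma span_B (hn : 2 < n) (hk : 2 ≤ k) :
    Submodule.span ℂ (Set.range fun i : Fin k => FF n k 1 (i.val + 1))
      = Submodule.span ℂ (Set.range (Bfam n k)) := by
  have hconst : ∀ I : ℕ, 1 ≤ I → I ≤ k →
      FF n k 1 I + FF n k 1 (k+1-I) = fun _ : XX n k => ((n*(n-1) : ℕ) : ℂ) := by
    intro I h1 h2
    funext x
    rw [Pi.add_apply, FF_one_pair n k x h1 h2]
  have hc0 : ((n*(n-1) : ℕ) : ℂ) ≠ 0 := Nat.cast_ne_zero.mpr (by
    have : 0 < n * (n - 1) := Nat.mul_pos (by omega) (by omega)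
    omega)
  have hconst_mem : (fun _ : XX n k => ((n*(n-1):ℕ):ℂ)) ∈
      Submodule.span ℂ (Set.range (Bfam n k)) := by
    have heq : (fun _ : XX n k => ((n*(n-1):ℕ):ℂ))
        = ((n*(n-1):ℕ):ℂ) • Bfam n k ⟨k/2, by omega⟩ := by
      funext x
      rw [Bfam, if_neg (lt_irrefl _)]
      simp
    rw [heq]
    exact Submodule.smul_mem _ _ (Submodule.subset_span ⟨_, rfl⟩)
  apply le_antisymm
  · rw [Submodule.span_le]
    rintro _ ⟨i, rfl⟩
    dsimp only
    by_cases h1 : i.val < k/2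
    · refine Submodule.subset_span ⟨⟨i.val, by omega⟩, ?_⟩
      rw [Bfam, if_pos (by exact h1 : (⟨i.val, by omega⟩ : Fin (k/2+1)).val < k/2)]
    · by_cases h2 : k - 1 - i.val < k/2
      · have hpair := hconst (k - i.val) (by omega) (by omega)
        rw [show k+1-(k-i.val) = i.val + 1 by omega] at hpair
        have heq : FF n k 1 (i.val+1)
            = (fun _ : XX n k => ((n*(n-1):ℕ):ℂ)) - FF n k 1 (k - i.val) := by
          rw [← hpair]
          funext x
          simp
        rw [heq]
        apply Submodule.sub_mem _ hconst_mem
        have heq2 : FF n k 1 (k - i.val) = Bfam n k ⟨k-1-i.val, by omega⟩ := by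
          rw [Bfam, if_pos (by exact h2 : (⟨k-1-i.val, by omega⟩ : Fin (k/2+1)).val < k/2)]
          rw [show (⟨k-1-i.val, by omega⟩ : Fin (k/2+1)).val + 1 = k - i.val by
            simp only []; omega]
        rw [heq2]
        exact Submodule.subset_span ⟨_, rfl⟩
      · have hi : i.val = k/2 ∧ k = 2*(k/2)+1 := by
          have := i.isLt
          omega
        have hmid : k + 1 - (i.val + 1) = i.val + 1 := by omega
        have hpair := hconst (i.val+1) (by omega) (by omega)
        rw [hmid] at hpair
        have heq : FF n k 1 (i.val + 1)
            = ((2 : ℂ)⁻¹ * ((n*(n-1):ℕ):ℂ)) • Bfam n k ⟨k/2, by omega⟩ := by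
          funext x
          have hfx := congrFun hpair x
          rw [Pi.add_apply] at hfx
          rw [Bfam, if_neg (lt_irrefl _)]
          simp only [Pi.smul_apply, smul_eq_mul, mul_one]
          linear_combination hfx / 2
        rw [heq]
        exact Submodule.smul_mem _ _ (Submodule.subset_span ⟨_, rfl⟩)
  · rw [Submodule.span_le]
    rintro _ ⟨j, rfl⟩
    by_cases hj : j.val < k/2
    · have heq : Bfam n k j = FF n k 1 (j.val+1) := by rw [Bfam, if_pos hj]
      rw [heq]
      exact Submodule.subset_span ⟨⟨j.val, by omega⟩, rfl⟩
    · have hBj : Bfam n k j = fun _ => (1:ℂ) := by rw [Bfam, if_neg hj]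
      have hpair := hconst 1 (le_refl 1) (by omega)
      have heq : Bfam n k j = ((n*(n-1):ℕ):ℂ)⁻¹ • (FF n k 1 1 + FF n k 1 (k+1-1)) := by
        rw [hpair, hBj]
        funext x
        simp only [Pi.smul_apply, smul_eq_mul, mul_one]
        rw [inv_mul_cancel₀ hc0]
      rw [heq]
      apply Submodule.smul_mem
      apply Submodule.add_mem
      · exact Submodule.subset_span ⟨⟨0, by omega⟩, rfl⟩
      · refine Submodule.subset_span ⟨⟨k-1, by omega⟩, ?_⟩
        show FF n k 1 ((⟨k-1, by omega⟩ : Fin k).val + 1) = FF n k 1 (k + 1 - 1)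
        congr 1
        show k - 1 + 1 = k + 1 - 1
        omega

end Aux

theorem stmt_17 (n k : ℕ) [NeZero n] (hn : 2 < n) (hk : 2 ≤ k) :
    (∀ ζ : ℂ, ζ ^ n = 1 → ζ ≠ 1 →
        Module.finrank ℂ ↥(Vspan n k ⊓ Module.End.eigenspace (Ubig n k) ζ) = k) ∧
      Module.finrank ℂ ↥(Vspan n k ⊓ Module.End.eigenspace (Ubig n k) 1) = k / 2 + 1 := by
  constructor
  · intro ζ hζn hζ1
    have hξζ : ζ ^ (n-1) * ζ = 1 := by
      rw [← pow_succ, show n-1+1 = n by omega, hζn]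
    have hξn : (ζ ^ (n-1)) ^ n = 1 := by
      rw [← pow_mul, mul_comm, pow_mul, hζn, one_pow]
    have hξ1 : ζ ^ (n-1) ≠ 1 := by
      intro h
      rw [h, one_mul] at hξζ
      exact hζ1 hξζ
    rw [inf_eigen_eq_span n k hn hζn hξζ hξn,
      finrank_span_eq_card (indep_ne_one n k hn hk hξ1 hξn), Fintype.card_fin]
  · have h11 : (1:ℂ) * 1 = 1 := one_mul 1
    rw [inf_eigen_eq_span n k hn (one_pow n) h11 (one_pow n), span_B n k hn hk,
      finrank_span_eq_card (indep_B n k hn hk), Fintype.card_fin]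
end
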